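/- Let G and H be simple graphs on the vertex set {1,…,n}, let φ be a bijection of {1,…,n} onto itself that is NOT an isomorphism of G onto H, and let S be a nonempty finite set of real numbers. Then the number of points (ε_1, …, ε_n) ∈ S^n satisfying det(A(G) + diag(ε_1,…,ε_n)) = det(A(H) + P_φ diag(ε_1,…,ε_n) P_φ^⊤) is at most n·|S|^{n-1}. (Hence for ε_1,…,ε_n selected independently and uniformly from S, the probability of this equality is at most n/|S|.) -/

import Mathlib

open scoped Matrix

open MvPolynomial Finset Matrix

/-- The permutation matrix `P_φ` of a permutation `φ`, with `(P_φ)_{ij} = 1` iff `i = φ j`. -/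
def permMatrix {n : ℕ} (φ : Equiv.Perm (Fin n)) : Matrix (Fin n) (Fin n) ℝ :=
  Matrix.of fun i j => if i = φ j then (1 : ℝ) else 0



open Classical in
theorem sz_aux : ∀ (n : ℕ) (d : ℕ) (p : MvPolynomial (Fin n) ℝ), p ≠ 0 → p.totalDegree ≤ d →
    ∀ S : Finset ℝ,
    ((Fintype.piFinset fun _ : Fin n => S).filter fun ε => eval ε p = 0).card * S.card
      ≤ d * S.card ^ n := by
  intro n
  induction n with
  | zero =>
    intro d p hp hd S
    have : ((Fintype.piFinset fun _ : Fin 0 => S).filter fun ε => eval ε p = 0) = ∅ := by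
      rw [Finset.eq_empty_iff_forall_notMem]
      intro ε hε
      rw [Finset.mem_filter] at hε
      obtain ⟨-, h0⟩ := hε
      obtain ⟨a, rfl⟩ := (MvPolynomial.C_surjective (Fin 0)) p
      rw [eval_C] at h0
      subst h0
      simp at hp
    rw [this]
    simp
  | succ n ih =>
    intro d p hp hd S
    set q : Polynomial (MvPolynomial (Fin n) ℝ) := finSuccEquiv ℝ n p with hq
    have hq0 : q ≠ 0 := by
      intro h
      apply hp
      apply (finSuccEquiv ℝ n).injective
      rw [← hq, h, map_zero]
    set m := q.natDegree with hm
    have hlead : q.coeff m ≠ 0 := Polynomial.leadingCoeff_ne_zero.mpr hq0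
    have hdeg := totalDegree_coeff_finSuccEquiv_add_le p m hlead
    have hmd : m ≤ d := le_trans (le_trans (Nat.le_add_left _ _) hdeg) hd
    rw [← hq] at hdeg
    have hleaddeg : (q.coeff m).totalDegree ≤ d - m := by omega
    -- the two pieces
    set W := ((Fintype.piFinset fun _ : Fin n => S).filter fun ε' => eval ε' (q.coeff m) = 0)
      with hW
    have hWcard : W.card * S.card ≤ (d - m) * S.card ^ n := ih (d - m) _ hlead hleaddeg S
    set Z := ((Fintype.piFinset fun _ : Fin (n+1) => S).filter fun ε => eval ε p = 0) with hZ
    set Z₁ := ((Fintype.piFinset fun _ : Fin (n+1) => S).filter fun ε =>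
        eval (Fin.tail ε) (q.coeff m) = 0) with hZ₁
    set Z₂ := ((Fintype.piFinset fun _ : Fin (n+1) => S).filter fun ε =>
        eval (Fin.tail ε) (q.coeff m) ≠ 0 ∧ eval ε p = 0) with hZ₂
    have hsub : Z ⊆ Z₁ ∪ Z₂ := by
      intro ε hε
      rw [hZ, Finset.mem_filter] at hε
      by_cases h : eval (Fin.tail ε) (q.coeff m) = 0
      · exact Finset.mem_union_left _ (Finset.mem_filter.mpr ⟨hε.1, h⟩)
      · exact Finset.mem_union_right _ (Finset.mem_filter.mpr ⟨hε.1, h, hε.2⟩)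
    -- card Z₁
    have hZ₁card : Z₁.card = S.card * W.card := by
      rw [← Finset.card_product]
      apply Finset.card_bij (fun ε _ => (ε 0, Fin.tail ε))
      · intro ε hε
        rw [hZ₁, Finset.mem_filter, Fintype.mem_piFinset] at hε
        rw [Finset.mem_product, hW, Finset.mem_filter, Fintype.mem_piFinset]
        exact ⟨hε.1 0, fun i => hε.1 i.succ, hε.2⟩
      · intro a ha b hb hab
        simp only [Prod.mk.injEq] at hab
        funext i
        refine Fin.cases ?_ ?_ i
        · exact hab.1
        · intro k; exact congrFun hab.2 k
      · intro (x, s) hs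
        rw [Finset.mem_product, hW, Finset.mem_filter, Fintype.mem_piFinset] at hs
        refine ⟨Fin.cons x s, ?_, ?_⟩
        · rw [hZ₁, Finset.mem_filter, Fintype.mem_piFinset]
          constructor
          · intro i
            refine Fin.cases ?_ ?_ i
            · simpa using hs.1
            · intro k; simpa using hs.2.1 k
          · rw [Fin.tail_cons]; exact hs.2.2
        · simp
    have hfiber : ∀ s : Fin n → ℝ, eval s (q.coeff m) ≠ 0 →
        (Polynomial.map (eval s) q).roots.toFinset.card ≤ m := by
      intro s _
      calc (Polynomial.map (eval s) q).roots.toFinset.card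
          ≤ (Polynomial.map (eval s) q).roots.card := Multiset.toFinset_card_le _
        _ ≤ (Polynomial.map (eval s) q).natDegree := Polynomial.card_roots' _
        _ ≤ m := Polynomial.natDegree_map_le
    have hZ₂card : Z₂.card ≤ m * S.card ^ n := by
      have h1 : Z₂.card ≤ ((Fintype.piFinset fun _ : Fin n => S).sigma
          (fun s => (Polynomial.map (eval s) q).roots.toFinset)).card := by
        apply Finset.card_le_card_of_injOn (fun ε => ⟨Fin.tail ε, ε 0⟩)
        · intro ε hε
          rw [Finset.mem_coe, hZ₂, Finset.mem_filter, Fintype.mem_piFinset] at hε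
          rw [Finset.mem_coe, Finset.mem_sigma]
          refine ⟨?_, ?_⟩
          · rw [Fintype.mem_piFinset]; intro i; exact hε.1 i.succ
          · rw [Multiset.mem_toFinset, Polynomial.mem_roots']
            refine ⟨?_, ?_⟩
            · intro hmap0
              apply hε.2.1
              have := congrArg (fun r => r.coeff m) hmap0
              simpa [Polynomial.coeff_map] using this
            · show Polynomial.eval (ε 0) _ = 0
              rw [← eval_eq_eval_mv_eval', Fin.cons_self_tail]
              exact hε.2.2
        · intro a _ b _ hab
          rw [Sigma.ext_iff] at hab
          have h2 : a 0 = b 0 := eq_of_heq hab.2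
          funext i
          refine Fin.cases h2 (fun k => congrFun hab.1 k) i
      have h2 : ((Fintype.piFinset fun _ : Fin n => S).sigma
          (fun s => (Polynomial.map (eval s) q).roots.toFinset)).card
          ≤ m * S.card ^ n := by
        rw [Finset.card_sigma]
        calc ∑ s ∈ (Fintype.piFinset fun _ : Fin n => S),
              (Polynomial.map (eval s) q).roots.toFinset.card
            ≤ ∑ _s ∈ (Fintype.piFinset fun _ : Fin n => S), m := by
              apply Finset.sum_le_sum
              intro s _
              calc (Polynomial.map (eval s) q).roots.toFinset.card
                  ≤ (Polynomial.map (eval s) q).roots.card := Multiset.toFinset_card_le _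
                _ ≤ (Polynomial.map (eval s) q).natDegree := Polynomial.card_roots' _
                _ ≤ m := Polynomial.natDegree_map_le
          _ = m * S.card ^ n := by
              rw [Finset.sum_const, Fintype.card_piFinset]
              simp [mul_comm]
      exact le_trans h1 h2
    calc Z.card * S.card ≤ (Z₁.card + Z₂.card) * S.card := by
          apply Nat.mul_le_mul_right
          exact le_trans (Finset.card_le_card hsub) (Finset.card_union_le _ _)
      _ = S.card * W.card * S.card + Z₂.card * S.card := by rw [hZ₁card, add_mul]
      _ ≤ S.card * ((d - m) * S.card ^ n) + (m * S.card ^ n) * S.card := by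
          apply Nat.add_le_add
          · rw [mul_assoc]; exact Nat.mul_le_mul_left _ hWcard
          · exact Nat.mul_le_mul_right _ hZ₂card
      _ = ((d - m) + m) * (S.card ^ n * S.card) := by ring
      _ = d * S.card ^ (n + 1) := by rw [Nat.sub_add_cancel hmd, pow_succ]



variable {n : ℕ}

/-- The exponent vector of the squarefree monomial `∏_{k ∉ {i,j}} X k`. -/
noncomputable def msupp (i j : Fin n) : Fin n →₀ ℕ :=
  ∑ k ∈ ({i, j}ᶜ : Finset (Fin n)), Finsupp.single k 1

lemma msupp_apply (i j k : Fin n) :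
    msupp i j k = if k ∈ ({i, j}ᶜ : Finset (Fin n)) then 1 else 0 := by
  classical
  rw [msupp, Finsupp.finset_sum_apply]
  simp [Finsupp.single_apply]

/-- The matrix `A.map C + diagonal (fun k => X (τ.symm k))`. -/
noncomputable def detPolyMat (A : Matrix (Fin n) (Fin n) ℝ) (τ : Equiv.Perm (Fin n)) :
    Matrix (Fin n) (Fin n) (MvPolynomial (Fin n) ℝ) :=
  A.map MvPolynomial.C + Matrix.diagonal fun k => MvPolynomial.X (τ.symm k)

lemma prod_X_eq (s : Finset (Fin n)) :
    (∏ k ∈ s, (X k : MvPolynomial (Fin n) ℝ)) = monomial (∑ k ∈ s, Finsupp.single k 1) 1 := by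
  rw [monomial_sum_one]
  rfl

lemma coeff_detPoly (A : Matrix (Fin n) (Fin n) ℝ) (hA : ∀ k, A k k = 0)
    (τ : Equiv.Perm (Fin n)) (i j : Fin n) (hij : i ≠ j) :
    MvPolynomial.coeff (msupp i j) (detPolyMat A τ).det
      = -(A (τ i) (τ j) * A (τ j) (τ i)) := by
  classical
  have hτij : τ i ≠ τ j := fun h => hij (τ.injective h)
  rw [Matrix.det_apply]
  rw [MvPolynomial.coeff_sum]
  rw [Finset.sum_eq_single (Equiv.swap (τ i) (τ j))]
  · -- the swap term
    have hsign : Equiv.Perm.sign (Equiv.swap (τ i) (τ j)) = -1 := Equiv.Perm.sign_swap hτij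
    rw [hsign]
    have hprod : (∏ k, detPolyMat A τ (Equiv.swap (τ i) (τ j) k) k)
        = MvPolynomial.C (A (τ j) (τ i) * A (τ i) (τ j)) *
            monomial (msupp i j) 1 := by
      rw [← Finset.prod_mul_prod_compl ({τ i, τ j} : Finset (Fin n))]
      have h1 : (∏ k ∈ ({τ i, τ j} : Finset (Fin n)),
          detPolyMat A τ (Equiv.swap (τ i) (τ j) k) k)
          = MvPolynomial.C (A (τ j) (τ i) * A (τ i) (τ j)) := by
        rw [Finset.prod_pair hτij]
        simp only [detPolyMat]
        simp [Equiv.swap_apply_left, Equiv.swap_apply_right, Matrix.diagonal_apply_ne',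
          Matrix.diagonal_apply_ne, hτij, hτij.symm, Matrix.add_apply, Matrix.map_apply]
      have h2 : (∏ k ∈ ({τ i, τ j} : Finset (Fin n))ᶜ,
          detPolyMat A τ (Equiv.swap (τ i) (τ j) k) k)
          = monomial (msupp i j) 1 := by
        have hfix : ∀ k ∈ ({τ i, τ j} : Finset (Fin n))ᶜ,
            detPolyMat A τ (Equiv.swap (τ i) (τ j) k) k = X (τ.symm k) := by
          intro k hk
          simp only [Finset.mem_compl, Finset.mem_insert, Finset.mem_singleton, not_or] at hk
          rw [Equiv.swap_apply_of_ne_of_ne hk.1 hk.2]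
          rw [detPolyMat]
          simp [Matrix.add_apply, Matrix.map_apply, Matrix.diagonal_apply_eq, hA k]
        rw [Finset.prod_congr rfl hfix]
        -- reindex : ∏_{k ∈ {τi,τj}ᶜ} X (τ.symm k) = ∏_{l ∈ {i,j}ᶜ} X l
        have himg : ({τ i, τ j} : Finset (Fin n))ᶜ = Finset.image τ ({i, j}ᶜ) := by
          ext x
          simp only [Finset.mem_compl, Finset.mem_insert, Finset.mem_singleton, not_or,
            Finset.mem_image]
          constructor
          · rintro ⟨h1, h2⟩
            exact ⟨τ.symm x, ⟨fun h => h1 (by rw [← h]; simp), fun h => h2 (by rw [← h]; simp)⟩,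
              by simp⟩
          · rintro ⟨y, ⟨hy1, hy2⟩, rfl⟩
            exact ⟨fun h => hy1 (τ.injective h), fun h => hy2 (τ.injective h)⟩
        rw [himg, Finset.prod_image (fun a _ b _ h => τ.injective h)]
        simp only [Equiv.symm_apply_apply]
        rw [prod_X_eq, msupp]
      rw [h1, h2]
    rw [hprod]
    have h3 : coeff (msupp i j) (MvPolynomial.C (A (τ j) (τ i) * A (τ i) (τ j)) *
        monomial (msupp i j) 1) = A (τ j) (τ i) * A (τ i) (τ j) := by
      rw [coeff_C_mul, coeff_monomial, if_pos rfl, mul_one]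
    simp only [Units.smul_def, Units.val_neg, Units.val_one, neg_zsmul, one_zsmul]
    rw [coeff_neg, h3]
    ring
  · -- all other permutations contribute 0
    intro σ _ hσ
    suffices hc : coeff (msupp i j) (∏ k, detPolyMat A τ (σ k) k) = 0 by
      rw [Units.smul_def, coeff_smul, hc, smul_zero]
    by_cases hfix : ∀ l : Fin n, l ≠ i → l ≠ j → σ (τ l) = τ l
    · -- σ fixes everything outside {τ i, τ j}, and σ ≠ swap, so σ = 1
      have hout : ∀ x, x ≠ τ i → x ≠ τ j → σ x = x := by
        intro x hx1 hx2
        have h1 : τ.symm x ≠ i := fun h => hx1 (by rw [← h, Equiv.apply_symm_apply])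
        have h2 : τ.symm x ≠ j := fun h => hx2 (by rw [← h, Equiv.apply_symm_apply])
        simpa using hfix (τ.symm x) h1 h2
      have hσi : σ (τ i) = τ i ∨ σ (τ i) = τ j := by
        by_contra h
        push_neg at h
        exact h.1 (σ.injective (hout _ h.1 h.2))
      have hone : ∀ x, σ x = x := by
        rcases hσi with hi1 | hi2
        · have hσj : σ (τ j) = τ j := by
            rcases (by
              by_contra h
              push_neg at h
              exact h.1 (σ.injective (hout _ h.2 h.1)) : σ (τ j) = τ j ∨ σ (τ j) = τ i) with
              h | h
            · exact h
            · exact absurd (σ.injective (h.trans hi1.symm)) hτij.symm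
          intro x
          by_cases hx1 : x = τ i
          · rw [hx1, hi1]
          by_cases hx2 : x = τ j
          · rw [hx2, hσj]
          exact hout x hx1 hx2
        · exfalso
          apply hσ
          have hσj : σ (τ j) = τ i := by
            rcases (by
              by_contra h
              push_neg at h
              exact h.1 (σ.injective (hout _ h.2 h.1)) : σ (τ j) = τ j ∨ σ (τ j) = τ i) with
              h | h
            · exact absurd (σ.injective (hi2.trans h.symm)) hτij
            · exact h
          ext x
          by_cases hx1 : x = τ i
          · rw [hx1, hi2, Equiv.swap_apply_left]
          by_cases hx2 : x = τ j
          · rw [hx2, hσj, Equiv.swap_apply_right]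
          rw [hout x hx1 hx2, Equiv.swap_apply_of_ne_of_ne hx1 hx2]
      have hprod1 : (∏ k, detPolyMat A τ (σ k) k)
          = ∏ k, (X (τ.symm k) : MvPolynomial (Fin n) ℝ) := by
        apply Finset.prod_congr rfl
        intro k _
        rw [hone k, detPolyMat]
        simp [Matrix.add_apply, Matrix.map_apply, Matrix.diagonal_apply_eq, hA k]
      have hprod2 : (∏ k, (X (τ.symm k) : MvPolynomial (Fin n) ℝ))
          = monomial (∑ k : Fin n, Finsupp.single k 1) 1 := by
        rw [Equiv.prod_comp τ.symm (fun l => (X l : MvPolynomial (Fin n) ℝ))]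
        exact prod_X_eq Finset.univ
      rw [hprod1, hprod2, coeff_monomial, if_neg]
      intro h
      have h1 : msupp i j i = 0 := by
        rw [msupp_apply]
        simp
      have h2 : (∑ k : Fin n, Finsupp.single k 1) i = 1 := by
        rw [Finsupp.finset_sum_apply]
        simp [Finsupp.single_apply]
      rw [← h] at h1
      rw [h1] at h2
      exact one_ne_zero h2.symm
    · -- σ moves some τ l₀ with l₀ ∉ {i, j}: the variable X l₀ cannot appear
      push_neg at hfix
      obtain ⟨l₀, hl0i, hl0j, hστ⟩ := hfix
      have hm1 : msupp i j l₀ = 1 := by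
        rw [msupp_apply, if_pos]
        simp [hl0i, hl0j]
      have hdeg : degreeOf l₀ (∏ k, detPolyMat A τ (σ k) k) = 0 := by
        rw [← Nat.le_zero]
        calc degreeOf l₀ (∏ k, detPolyMat A τ (σ k) k)
            ≤ ∑ k : Fin n, degreeOf l₀ (detPolyMat A τ (σ k) k) :=
              degreeOf_prod_le _ _ _
          _ ≤ ∑ _k : Fin n, 0 := by
              apply Finset.sum_le_sum
              intro k _
              by_cases hkk : σ k = k
              · have hk : τ.symm k ≠ l₀ := by
                  intro h
                  apply hστ
                  have : k = τ l₀ := by rw [← h, Equiv.apply_symm_apply]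
                  rw [← this, hkk, this]
                rw [detPolyMat]
                simp only [Matrix.add_apply, Matrix.map_apply, hkk, Matrix.diagonal_apply_eq]
                calc degreeOf l₀ (MvPolynomial.C (A k k) + X (τ.symm k))
                    ≤ max (degreeOf l₀ (MvPolynomial.C (A k k) : MvPolynomial (Fin n) ℝ))
                        (degreeOf l₀ (X (τ.symm k) : MvPolynomial (Fin n) ℝ)) :=
                      degreeOf_add_le _ _ _
                  _ ≤ 0 := by
                      rw [degreeOf_C, degreeOf_X, if_neg (fun h => hk h.symm)]
                      simp
              · rw [detPolyMat]
                simp only [Matrix.add_apply, Matrix.map_apply,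
                  Matrix.diagonal_apply_ne _ hkk, add_zero]
                rw [degreeOf_C]
          _ = 0 := by simp
      by_contra hc
      have := monomial_le_degreeOf l₀ (MvPolynomial.mem_support_iff.mpr hc)
      rw [hdeg, hm1] at this
      exact Nat.not_succ_le_zero 0 this
  · intro h
    exact absurd (Finset.mem_univ _) h

lemma totalDegree_detPoly_le (A : Matrix (Fin n) (Fin n) ℝ) (τ : Equiv.Perm (Fin n)) :
    ((detPolyMat A τ).det).totalDegree ≤ n := by
  classical
  rw [Matrix.det_apply']
  refine le_trans (totalDegree_finset_sum _ _) (Finset.sup_le ?_)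
  intro σ _
  have hentry : ∀ x k, (detPolyMat A τ x k).totalDegree ≤ 1 := by
    intro x k
    rw [detPolyMat]
    by_cases hxk : x = k
    · subst hxk
      simp only [Matrix.add_apply, Matrix.map_apply, Matrix.diagonal_apply_eq]
      refine le_trans (totalDegree_add _ _) (max_le ?_ ?_)
      · rw [totalDegree_C]; omega
      · rw [totalDegree_X]
    · simp only [Matrix.add_apply, Matrix.map_apply, Matrix.diagonal_apply_ne _ hxk, add_zero]
      rw [totalDegree_C]; omega
  calc (((Equiv.Perm.sign σ : ℤ) : MvPolynomial (Fin n) ℝ) *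
        ∏ k, detPolyMat A τ (σ k) k).totalDegree
      ≤ ((Equiv.Perm.sign σ : ℤ) : MvPolynomial (Fin n) ℝ).totalDegree
        + (∏ k, detPolyMat A τ (σ k) k).totalDegree := totalDegree_mul _ _
    _ ≤ 0 + ∑ k : Fin n, (detPolyMat A τ (σ k) k).totalDegree := by
        apply Nat.add_le_add
        · rw [← map_intCast (MvPolynomial.C : ℝ →+* MvPolynomial (Fin n) ℝ), totalDegree_C]
        · exact totalDegree_finset_prod _ _
    _ ≤ 0 + ∑ _k : Fin n, 1 := by
        apply Nat.add_le_add_left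
        exact Finset.sum_le_sum fun k _ => hentry _ _
    _ ≤ n := by simp

lemma eval_detPoly (A : Matrix (Fin n) (Fin n) ℝ) (τ : Equiv.Perm (Fin n)) (ε : Fin n → ℝ) :
    MvPolynomial.eval ε (detPolyMat A τ).det
      = (A + Matrix.diagonal fun k => ε (τ.symm k)).det := by
  rw [RingHom.map_det, RingHom.mapMatrix_apply]
  congr 1
  ext x k
  rw [Matrix.map_apply, detPolyMat]
  by_cases hxk : x = k
  · subst hxk
    simp [Matrix.add_apply, Matrix.map_apply, Matrix.diagonal_apply_eq]
  · simp [Matrix.add_apply, Matrix.map_apply, Matrix.diagonal_apply_ne _ hxk]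

lemma permMatrix_conj (φ : Equiv.Perm (Fin n)) (ε : Fin n → ℝ)
    (P : Matrix (Fin n) (Fin n) ℝ) (hP : P = Matrix.of fun i j => if i = φ j then (1 : ℝ) else 0) :
    P * Matrix.diagonal ε * Pᵀ = Matrix.diagonal fun k => ε (φ.symm k) := by
  subst hP
  ext i j
  rw [Matrix.mul_apply]
  have hterm : ∀ k, (Matrix.of (fun i j => if i = φ j then (1 : ℝ) else 0) * Matrix.diagonal ε) i k
      * (Matrix.of (fun i j => if i = φ j then (1 : ℝ) else 0))ᵀ k j
      = (fun l => (if i = l then ε (φ.symm l) else 0) * (if j = l then (1:ℝ) else 0)) (φ k) := by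
    intro k
    rw [Matrix.mul_diagonal, Matrix.transpose_apply]
    simp only [Matrix.of_apply, Equiv.symm_apply_apply]
    by_cases h1 : i = φ k <;> by_cases h2 : j = φ k <;> simp [h1, h2]
  rw [Finset.sum_congr rfl fun k _ => hterm k]
  rw [Equiv.sum_comp φ (fun l => (if i = l then ε (φ.symm l) else 0) * (if j = l then (1:ℝ) else 0))]
  by_cases hij : i = j
  · subst hij
    rw [Matrix.diagonal_apply_eq]
    rw [Finset.sum_eq_single i]
    · simp
    · intro b _ hb
      simp [Ne.symm hb]
    · simp
  · rw [Matrix.diagonal_apply_ne _ hij]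
    apply Finset.sum_eq_zero
    intro l _
    by_cases h1 : i = l <;> by_cases h2 : j = l
    · exact absurd (h1.trans h2.symm) hij
    all_goals simp [h1, h2]


open Classical in
/-- Schwartz–Zippel bound: if `φ` is not an isomorphism of `G` onto `H`
and `S` is a nonempty finite set of reals, then at most `n·|S|^{n-1}` of the points
`ε ∈ Sⁿ` satisfy `det (A(G) + diag ε) = det (A(H) + P_φ (diag ε) P_φᵀ)`. -/
theorem schwartz_zippel_count_bound {n : ℕ} (G H : SimpleGraph (Fin n))
    [DecidableRel G.Adj] [DecidableRel H.Adj] (φ : Equiv.Perm (Fin n))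
    (hφ : ¬ ∀ i j, G.Adj i j ↔ H.Adj (φ i) (φ j))
    (S : Finset ℝ) (hS : S.Nonempty) :
    ((Fintype.piFinset fun _ : Fin n => S).filter fun ε =>
        (G.adjMatrix ℝ + Matrix.diagonal ε).det =
          (H.adjMatrix ℝ + permMatrix φ * Matrix.diagonal ε * (permMatrix φ)ᵀ).det).card
      ≤ n * S.card ^ (n - 1) := by
  rcases Nat.eq_zero_or_pos n with hn | hn
  · subst hn
    exact absurd (fun i => i.elim0) hφ
  · obtain ⟨i, hi⟩ := not_forall.mp hφ
    obtain ⟨j, hj⟩ := not_forall.mp hi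
    have hij : i ≠ j := by
      rintro rfl
      exact hj (iff_of_false (G.loopless.irrefl i) (H.loopless.irrefl (φ i)))
    set f := (detPolyMat (G.adjMatrix ℝ) 1).det - (detPolyMat (H.adjMatrix ℝ) φ).det with hfdef
    have hGdiag : ∀ k, (G.adjMatrix ℝ) k k = 0 := fun k => by simp
    have hHdiag : ∀ k, (H.adjMatrix ℝ) k k = 0 := fun k => by simp
    have hcoeff : MvPolynomial.coeff (msupp i j) f ≠ 0 := by
      rw [hfdef, MvPolynomial.coeff_sub, coeff_detPoly _ hGdiag 1 i j hij,
        coeff_detPoly _ hHdiag φ i j hij]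
      simp only [Equiv.Perm.coe_one, id_eq]
      by_cases hG : G.Adj i j
      · have hH : ¬ H.Adj (φ i) (φ j) := fun h => hj (iff_of_true hG h)
        have hG' : G.Adj j i := G.adj_symm hG
        have hH' : ¬ H.Adj (φ j) (φ i) := fun h => hH (H.adj_symm h)
        simp only [SimpleGraph.adjMatrix_apply, if_pos hG, if_pos hG', if_neg hH, if_neg hH']
        norm_num
      · have hH : H.Adj (φ i) (φ j) := by
          by_contra h
          exact hj (iff_of_false hG h)
        have hG' : ¬ G.Adj j i := fun h => hG (G.adj_symm h)
        have hH' : H.Adj (φ j) (φ i) := H.adj_symm hH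
        simp only [SimpleGraph.adjMatrix_apply, if_neg hG, if_neg hG', if_pos hH, if_pos hH']
        norm_num
    have hf0 : f ≠ 0 := fun h => hcoeff (by rw [h, MvPolynomial.coeff_zero])
    have hdeg : f.totalDegree ≤ n := by
      rw [hfdef, sub_eq_add_neg]
      refine le_trans (totalDegree_add _ _) (max_le (totalDegree_detPoly_le _ _) ?_)
      rw [totalDegree_neg]
      exact totalDegree_detPoly_le _ _
    have hset : ((Fintype.piFinset fun _ : Fin n => S).filter fun ε =>
        (G.adjMatrix ℝ + Matrix.diagonal ε).det =
          (H.adjMatrix ℝ + permMatrix φ * Matrix.diagonal ε * (permMatrix φ)ᵀ).det)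
        = ((Fintype.piFinset fun _ : Fin n => S).filter fun ε => MvPolynomial.eval ε f = 0) := by
      apply Finset.filter_congr
      intro ε _
      have e1 : MvPolynomial.eval ε f = (G.adjMatrix ℝ + Matrix.diagonal ε).det
          - (H.adjMatrix ℝ + Matrix.diagonal fun k => ε (φ.symm k)).det := by
        rw [hfdef, map_sub, eval_detPoly, eval_detPoly]
        congr 2
      rw [e1, sub_eq_zero, permMatrix_conj φ ε (permMatrix φ) rfl]
    rw [hset]
    have hb := sz_aux n n f hf0 hdeg S
    have hS0 : 0 < S.card := Finset.card_pos.mpr hS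
    apply Nat.le_of_mul_le_mul_right _ hS0
    calc ((Fintype.piFinset fun _ : Fin n => S).filter
          fun ε => MvPolynomial.eval ε f = 0).card * S.card
        ≤ n * S.card ^ n := hb
      _ = n * S.card ^ (n - 1) * S.card := by
          rw [mul_assoc, ← pow_succ, Nat.sub_add_cancel hn]
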